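/- Let p, q ≥ 1 and let H ∈ ℂ^{p×q}. Then for all unit vectors s, w ∈ ℂ^q: | ‖Hs‖² − ‖Hw‖² | ≤ 2‖H‖_F² · √(1 − |sᴴw|²). -/

import Mathlib

set_option maxHeartbeats 1000000

/-- Euclidean norm of a complex vector. -/
noncomputable def cnorm {k : ℕ} (v : Fin k → ℂ) : ℝ :=
  Real.sqrt (∑ i, ‖v i‖ ^ 2)

/-- Squared Frobenius norm of a complex matrix. -/
noncomputable def frobSq {p q : ℕ} (A : Matrix (Fin p) (Fin q) ℂ) : ℝ :=
  ∑ i, ∑ j, ‖A i j‖ ^ 2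

open scoped InnerProductSpace

noncomputable def toE {k : ℕ} (v : Fin k → ℂ) : EuclideanSpace ℂ (Fin k) :=
  (WithLp.equiv 2 (Fin k → ℂ)).symm v

lemma cnorm_eq {k : ℕ} (v : Fin k → ℂ) : cnorm v = ‖toE v‖ := by
  rw [EuclideanSpace.norm_eq]; rfl

lemma toE_sub {k : ℕ} (x y : Fin k → ℂ) : toE (x - y) = toE x - toE y := rfl
lemma toE_add {k : ℕ} (x y : Fin k → ℂ) : toE (x + y) = toE x + toE y := rfl
lemma toE_smul {k : ℕ} (c : ℂ) (x : Fin k → ℂ) : toE (c • x) = c • toE x := rfl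

lemma inner_toE {k : ℕ} (x y : Fin k → ℂ) :
    ⟪toE x, toE y⟫_ℂ = ∑ i, (starRingEnd ℂ) (x i) * y i := by
  simp [toE, PiLp.inner_apply, RCLike.inner_apply]
  exact Finset.sum_congr rfl fun i _ => mul_comm _ _

lemma mulVec_bound {p q : ℕ} (H : Matrix (Fin p) (Fin q) ℂ) (v : Fin q → ℂ) :
    cnorm (H.mulVec v) ≤ Real.sqrt (frobSq H) * cnorm v := by
  rw [cnorm, cnorm, frobSq, ← Real.sqrt_mul (by positivity), Finset.sum_mul]
  apply Real.sqrt_le_sqrt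
  apply Finset.sum_le_sum
  intro i _
  have h := norm_inner_le_norm (𝕜 := ℂ) (toE (fun j => star (H i j))) (toE v)
  rw [inner_toE] at h
  simp only [RCLike.star_def, RingHom.id_apply, starRingEnd_self_apply] at h
  have h2 : H.mulVec v i = ∑ j, H i j * v j := by
    simp [Matrix.mulVec, dotProduct]
  rw [h2]
  calc ‖∑ j, H i j * v j‖ ^ 2 ≤ (‖toE (fun j => star (H i j))‖ * ‖toE v‖) ^ 2 := by
        apply pow_le_pow_left₀ (norm_nonneg _) h _
    _ = (∑ j, ‖H i j‖ ^ 2) * ∑ j, ‖v j‖ ^ 2 := by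
        rw [mul_pow, ← cnorm_eq, ← cnorm_eq, cnorm, cnorm,
          Real.sq_sqrt (by positivity), Real.sq_sqrt (by positivity)]
        simp

/-- For unit vectors `s, w`:
`| ‖Hs‖² − ‖Hw‖² | ≤ 2‖H‖_F² √(1 − |sᴴw|²)`. -/
theorem stmt13 (p q : ℕ) (hp : 1 ≤ p) (hq : 1 ≤ q) (H : Matrix (Fin p) (Fin q) ℂ)
    (s w : Fin q → ℂ) (hs : cnorm s = 1) (hw : cnorm w = 1) :
    |cnorm (H.mulVec s) ^ 2 - cnorm (H.mulVec w) ^ 2| ≤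
      2 * frobSq H * Real.sqrt (1 - ‖dotProduct (star s) w‖ ^ 2) := by
  set a : ℂ := dotProduct (star s) w with ha
  set ρ : ℝ := ‖a‖ with hρ
  set c : ℂ := if a = 0 then 1 else (‖a‖ : ℂ) / a with hc
  have hcn : ‖c‖ = 1 := by
    rw [hc]; split_ifs with h
    · simp
    · rw [norm_div, Complex.norm_real, Real.norm_eq_abs, abs_norm]
      field_simp
  have hca : c * a = (ρ : ℂ) := by
    rw [hc]; split_ifs with h
    · simp [h, hρ]
    · field_simp
      rw [hρ]
  set S := toE s with hS
  set W := toE w with hW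
  have hSn : ‖S‖ = 1 := by rw [← cnorm_eq, hs]
  have hWn : ‖W‖ = 1 := by rw [← cnorm_eq, hw]
  have hinner : ⟪S, W⟫_ℂ = a := by
    rw [hS, hW, inner_toE, ha, dotProduct]
    rfl
  have hρ1 : ρ ≤ 1 := by
    have := norm_inner_le_norm (𝕜 := ℂ) S W
    rwa [hinner, hSn, hWn, mul_one, ← hρ] at this
  have hρ0 : 0 ≤ ρ := norm_nonneg a
  set W' : EuclideanSpace ℂ (Fin q) := c • W with hW'
  have hW'n : ‖W'‖ = 1 := by rw [hW', norm_smul, hcn, one_mul, hWn]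
  have hinner' : ⟪S, W'⟫_ℂ = (ρ : ℂ) := by
    rw [hW', inner_smul_right, hinner, hca]
  have hre : RCLike.re ⟪S, W'⟫_ℂ = ρ := by rw [hinner']; simp
  -- norms of S ± W'
  have hsub : ‖S - W'‖ ^ 2 = 2 - 2 * ρ := by
    rw [norm_sub_sq (𝕜 := ℂ), hre, hSn, hW'n]; ring
  have hadd : ‖S + W'‖ ^ 2 = 2 + 2 * ρ := by
    rw [norm_add_sq (𝕜 := ℂ), hre, hSn, hW'n]; ring
  have hprod : ‖S - W'‖ * ‖S + W'‖ = 2 * Real.sqrt (1 - ρ ^ 2) := by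
    have e1 : ‖S - W'‖ = Real.sqrt (2 - 2 * ρ) := by
      rw [← hsub, Real.sqrt_sq (norm_nonneg _)]
    have e2 : ‖S + W'‖ = Real.sqrt (2 + 2 * ρ) := by
      rw [← hadd, Real.sqrt_sq (norm_nonneg _)]
    rw [e1, e2, ← Real.sqrt_mul (by nlinarith),
      show (2 - 2 * ρ) * (2 + 2 * ρ) = 2 ^ 2 * (1 - ρ ^ 2) by ring,
      Real.sqrt_mul (by positivity), Real.sqrt_sq (by norm_num)]
  set u := toE (H.mulVec s) with hu
  set v := toE (H.mulVec (c • w)) with hv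
  have hveq : v = c • toE (H.mulVec w) := by
    rw [hv, Matrix.mulVec_smul, toE_smul]
  have hvn : ‖v‖ = ‖toE (H.mulVec w)‖ := by
    rw [hveq, norm_smul, hcn, one_mul]
  have hkey : RCLike.re ⟪u - v, u + v⟫_ℂ = ‖u‖ ^ 2 - ‖v‖ ^ 2 := by
    rw [inner_sub_left, inner_add_right, inner_add_right]
    simp only [map_sub, map_add]
    rw [inner_self_eq_norm_sq, inner_self_eq_norm_sq, inner_re_symm]
    ring
  have humv : u - v = toE (H.mulVec (s - c • w)) := by
    rw [Matrix.mulVec_sub, toE_sub, hu, hv]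
  have hupv : u + v = toE (H.mulVec (s + c • w)) := by
    rw [Matrix.mulVec_add, toE_add, hu, hv]
  have hsmw : toE (s - c • w) = S - W' := by
    rw [toE_sub, toE_smul, ← hS, ← hW, hW']
  have hspw : toE (s + c • w) = S + W' := by
    rw [toE_add, toE_smul, ← hS, ← hW, hW']
  have hb1 : ‖u - v‖ ≤ Real.sqrt (frobSq H) * ‖S - W'‖ := by
    rw [humv, ← cnorm_eq, ← hsmw, ← cnorm_eq]
    exact mulVec_bound H _
  have hb2 : ‖u + v‖ ≤ Real.sqrt (frobSq H) * ‖S + W'‖ := by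
    rw [hupv, ← cnorm_eq, ← hspw, ← cnorm_eq]
    exact mulVec_bound H _
  have hF0 : 0 ≤ frobSq H := by
    rw [frobSq]
    exact Finset.sum_nonneg fun i _ => Finset.sum_nonneg fun j _ => sq_nonneg _
  calc |cnorm (H.mulVec s) ^ 2 - cnorm (H.mulVec w) ^ 2|
      = |‖u‖ ^ 2 - ‖v‖ ^ 2| := by rw [cnorm_eq, cnorm_eq, ← hu, hvn]
    _ = |RCLike.re ⟪u - v, u + v⟫_ℂ| := by rw [hkey]
    _ ≤ ‖⟪u - v, u + v⟫_ℂ‖ := RCLike.abs_re_le_norm _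
    _ ≤ ‖u - v‖ * ‖u + v‖ := norm_inner_le_norm _ _
    _ ≤ (Real.sqrt (frobSq H) * ‖S - W'‖) * (Real.sqrt (frobSq H) * ‖S + W'‖) := by
        apply mul_le_mul hb1 hb2 (norm_nonneg _) (by positivity)
    _ = frobSq H * (‖S - W'‖ * ‖S + W'‖) := by
        rw [show (Real.sqrt (frobSq H) * ‖S - W'‖) * (Real.sqrt (frobSq H) * ‖S + W'‖)
          = (Real.sqrt (frobSq H) * Real.sqrt (frobSq H)) * (‖S - W'‖ * ‖S + W'‖) by ring,
          Real.mul_self_sqrt hF0]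
    _ = 2 * frobSq H * Real.sqrt (1 - ρ ^ 2) := by rw [hprod]; ring
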